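/- Let {v_1, ..., v_n} be a tight frame in ℝ^k, let t_1,...,t_n ∈ ℝ and x_1,...,x_n ∈ ℝ^k. Then det(∑_{i=1}^n (v_i + t_i x_i) ⊗ (v_i + t_i x_i)) = 1 + 2∑_{i=1}^n t_i ⟨x_i, v_i⟩ + o(√(t_1² + ... + t_n²)) as (t_1,...,t_n) → 0. Equivalently, the gradient of the map (t_1,...,t_n) ↦ det(∑(v_i + t_i x_i)⊗(v_i + t_i x_i)) at 0 is (2⟨x_1,v_1⟩, ..., 2⟨x_n,v_n⟩). -/

import Mathlib

set_option maxHeartbeats 1000000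

open scoped Matrix

/-- Theorem 2 / `thm:determinant`: let `v 1, ..., v n` be a tight
frame in `ℝ^k`, `t₁, ..., t_n ∈ ℝ`, `x₁, ..., x_n ∈ ℝ^k`. Then
`det (∑ (vᵢ + tᵢ xᵢ) ⊗ (vᵢ + tᵢ xᵢ)) = 1 + 2 ∑ tᵢ ⟨xᵢ, vᵢ⟩ + o(√(t₁² + ... + t_n²))`
as `(t₁, ..., t_n) → 0` (the variable `t` ranges over `EuclideanSpace ℝ (Fin n)`,
whose norm is `√(t₁² + ... + t_n²)`). -/
theorem stmt_12 (n k : ℕ) (v : Fin n → Fin k → ℝ)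
    (hv : ∑ i, Matrix.vecMulVec (v i) (v i) = (1 : Matrix (Fin k) (Fin k) ℝ))
    (x : Fin n → Fin k → ℝ) :
    (fun t : EuclideanSpace ℝ (Fin n) =>
        Matrix.det (∑ i, Matrix.vecMulVec (v i + t i • x i) (v i + t i • x i))
          - (1 + 2 * ∑ i, t i * (x i ⬝ᵥ v i)))
      =o[nhds 0] fun t : EuclideanSpace ℝ (Fin n) => ‖t‖ := by

  classical
  -- determinant as a continuous multilinear map of the rows
  have hdet_cont : Continuous fun m : Fin k → Fin k → ℝ =>
      (Matrix.detRowAlternating (R := ℝ) (n := Fin k)).toMultilinearMap m := by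
    show Continuous fun m : Fin k → Fin k → ℝ => Matrix.det (Matrix.of m)
    exact continuous_id.matrix_det
  obtain ⟨C, -, hC⟩ :=
    (Matrix.detRowAlternating (R := ℝ) (n := Fin k)).toMultilinearMap.exists_bound_of_continuous
      hdet_cont
  set D : ContinuousMultilinearMap ℝ (fun _ : Fin k => (Fin k → ℝ)) ℝ :=
    (Matrix.detRowAlternating (R := ℝ) (n := Fin k)).toMultilinearMap.mkContinuous C hC with hD
  -- row functions and their derivatives
  set g : Fin k → EuclideanSpace ℝ (Fin n) → (Fin k → ℝ) :=
    fun a t => ∑ i, (v i a + t i * x i a) • (v i + t i • x i) with hg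
  set g' : Fin k → EuclideanSpace ℝ (Fin n) →L[ℝ] (Fin k → ℝ) := fun a =>
    ∑ i, ((v i a + (0 : EuclideanSpace ℝ (Fin n)) i * x i a) •
        (EuclideanSpace.proj i : EuclideanSpace ℝ (Fin n) →L[ℝ] ℝ).smulRight (x i) +
      ((x i a) • (EuclideanSpace.proj i : EuclideanSpace ℝ (Fin n) →L[ℝ] ℝ)).smulRight
        (v i + (0 : EuclideanSpace ℝ (Fin n)) i • x i)) with hg'
  have hgd : ∀ a, HasFDerivAt (g a) (g' a) 0 := by
    intro a
    refine HasFDerivAt.fun_sum fun i _ => ?_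
    have hp : HasFDerivAt (fun t : EuclideanSpace ℝ (Fin n) => (t i : ℝ))
        (EuclideanSpace.proj i : EuclideanSpace ℝ (Fin n) →L[ℝ] ℝ) 0 := by
      have h := ContinuousLinearMap.hasFDerivAt
        (f := (EuclideanSpace.proj i : EuclideanSpace ℝ (Fin n) →L[ℝ] ℝ)) (x := 0)
      exact h.congr_of_eventuallyEq (Filter.Eventually.of_forall fun t => by simp)
    exact ((hp.mul_const (x i a)).const_add (v i a)).smul
      ((hp.smul_const (x i)).const_add (v i))
  have hF := HasFDerivAt.multilinear_comp (f := D) hgd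
  have hF2 := hF.isLittleO
  have hF' := (Asymptotics.isLittleO_norm_right).2 hF2
  simp only [sub_zero] at hF'
  -- identify the pieces
  have key1 : ∀ t : EuclideanSpace ℝ (Fin n), D (fun a => g a t) =
      Matrix.det (∑ i, Matrix.vecMulVec (v i + t i • x i) (v i + t i • x i)) := by
    intro t
    show (Matrix.detRowAlternating (R := ℝ) (n := Fin k)).toMultilinearMap (fun a => g a t) = _
    show Matrix.det (Matrix.of fun a => g a t) = _
    congr 1
    ext a b
    simp only [hg, Matrix.of_apply, Matrix.sum_apply, Matrix.vecMulVec_apply, Finset.sum_apply,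
      Pi.smul_apply, Pi.add_apply, smul_eq_mul]
  have hrow0 : (fun b => g b 0) = fun b => (1 : Matrix (Fin k) (Fin k) ℝ) b := by
    funext b c
    have h := congrFun (congrFun hv b) c
    simp only [Matrix.sum_apply, Matrix.vecMulVec_apply] at h
    simp [hg, ← h, Finset.sum_apply]
  have key0 : D (fun a => g a 0) = 1 := by
    rw [key1 0]
    have : (∑ i, Matrix.vecMulVec (v i + (0 : EuclideanSpace ℝ (Fin n)) i • x i)
        (v i + (0 : EuclideanSpace ℝ (Fin n)) i • x i)) = (1 : Matrix (Fin k) (Fin k) ℝ) := by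
      rw [← hv]
      congr 1; funext i
      congr 1 <;> simp
    rw [this, Matrix.det_one]
  -- the derivative applied to t
  have keyL : ∀ t : EuclideanSpace ℝ (Fin n),
      (∑ a, (D.toContinuousLinearMap (fun b => g b 0) a) ∘L (g' a)) t
        = 2 * ∑ i, t i * (x i ⬝ᵥ v i) := by
    intro t
    have hupd : ∀ (a : Fin k) (w : Fin k → ℝ),
        D (Function.update (fun b => g b 0) a w) = w a := by
      intro a w
      rw [hrow0]
      show (Matrix.detRowAlternating (R := ℝ) (n := Fin k)).toMultilinearMap
        (Function.update (fun b => (1 : Matrix (Fin k) (Fin k) ℝ) b) a w) = w a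
      show Matrix.det (Matrix.updateRow (1 : Matrix (Fin k) (Fin k) ℝ) a w) = w a
      rw [← Matrix.cramer_transpose_apply, Matrix.transpose_one, Matrix.cramer_one]
      rfl
    have : (∑ a, (D.toContinuousLinearMap (fun b => g b 0) a) ∘L (g' a)) t
        = ∑ a, (g' a t) a := by
      rw [ContinuousLinearMap.sum_apply]
      refine Finset.sum_congr rfl fun a _ => ?_
      rw [ContinuousLinearMap.comp_apply]
      show D (Function.update (fun b => g b 0) a (g' a t)) = _
      rw [hupd]
    rw [this]
    have hga : ∀ a, (g' a t) a = ∑ i, 2 * (t i * (x i a * v i a)) := by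
      intro a
      rw [hg', ContinuousLinearMap.sum_apply, Finset.sum_apply]
      refine Finset.sum_congr rfl fun i _ => ?_
      simp only [ContinuousLinearMap.add_apply, ContinuousLinearMap.smul_apply,
        ContinuousLinearMap.smulRight_apply, PiLp.proj_apply, Pi.add_apply,
        Pi.smul_apply, smul_eq_mul]
      have h0 : (0 : EuclideanSpace ℝ (Fin n)) i = 0 := rfl
      rw [h0]
      ring
    rw [Finset.sum_congr rfl fun a _ => hga a, Finset.sum_comm, Finset.mul_sum]
    refine Finset.sum_congr rfl fun i _ => ?_
    simp only [dotProduct, Finset.mul_sum]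
  -- put everything together
  have : (fun t : EuclideanSpace ℝ (Fin n) =>
        Matrix.det (∑ i, Matrix.vecMulVec (v i + t i • x i) (v i + t i • x i))
          - (1 + 2 * ∑ i, t i * (x i ⬝ᵥ v i)))
      = fun t : EuclideanSpace ℝ (Fin n) => D (fun a => g a t) - D (fun a => g a 0)
          - (∑ a, (D.toContinuousLinearMap (fun b => g b 0) a) ∘L (g' a)) t := by
    funext t
    rw [key1, key0, keyL]
    ring
  rw [this]
  exact hF'
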